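/- Fix a finite price set P = {p_1,...,p_K} with 0 < p_1 < ... < p_K ≤ 1, a nonzero δ ∈ {-1,0,1}^D, integers S > 1 and M ∈ {1,...,S-1}, and a measurable policy π : [0,1]^D → P. For each bucket (λ,μ) in B^≥_{S,M}, write m(λ,μ,δ') = min over σ ∈ Face(λ,μ,δ') of min over x ∈ H_S(σ) of π(x). Let A = {(λ,μ) ∈ B^≥_{S,M} : m(λ,μ,0) > m(λ,μ,δ)}. Then |A| ≤ 2·D·K·S^{2D}/M. -/

import Mathlib

/-- The `δ`-face of the hyperrectangle with corners `lam ≤ mu` (1-based integer indices). -/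
def face (D : ℕ) (lam mu δ : Fin D → ℤ) : Set (Fin D → ℤ) :=
  {σ | ∀ d, (δ d = -1 → σ d = lam d) ∧ (δ d = 1 → σ d = mu d) ∧
            (δ d = 0 → lam d + 1 ≤ σ d ∧ σ d ≤ mu d - 1)}

/-- The grid cell of width `1/S` with (1-based) index `k`: half-open except the last one. -/
noncomputable def gridCellZ (S : ℕ) (k : ℤ) : Set ℝ :=
  if k = (S : ℤ) then Set.Icc (((k : ℝ) - 1) / S) ((k : ℝ) / S)
  else Set.Ico (((k : ℝ) - 1) / S) ((k : ℝ) / S)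

/-- The hypercube grid cell of `[0,1]^D` with multi-index `σ`. -/
noncomputable def gridCubeZ (S D : ℕ) (σ : Fin D → ℤ) : Set (Fin D → ℝ) :=
  {x | ∀ d, x d ∈ gridCellZ S (σ d)}

/-- The minimal price offered by `π` on the `δ'`-face of the bucket `(lam, mu)`. -/
noncomputable def faceMin (S D : ℕ) (π : (Fin D → ℝ) → ℝ) (lam mu δ' : Fin D → ℤ) : ℝ :=
  sInf (π '' ⋃ σ ∈ face D lam mu δ', gridCubeZ S D σ)

section Aux

variable {S D K : ℕ}

lemma gridCubeZ_nonempty (hS : 0 < S) (σ : Fin D → ℤ) : (gridCubeZ S D σ).Nonempty := by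
  have hS' : (0:ℝ) < (S:ℝ) := by exact_mod_cast hS
  refine ⟨fun d => ((σ d : ℝ) - 1)/S, fun d => ?_⟩
  have hlt : ((σ d : ℝ)-1)/S < (σ d : ℝ)/S := by
    rw [div_lt_div_iff₀ hS' hS']
    nlinarith
  unfold gridCellZ
  split_ifs
  · exact ⟨le_rfl, hlt.le⟩
  · exact ⟨le_rfl, hlt⟩

variable {π : (Fin D → ℝ) → ℝ} {p : Fin K → ℝ}

lemma faceMin_mono (hS : 0 < S) (hp0 : ∀ x, 0 ≤ π x)
    {l1 m1 l2 m2 d1 d2 : Fin D → ℤ}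
    (hsub : face D l1 m1 d1 ⊆ face D l2 m2 d2) (hne : (face D l1 m1 d1).Nonempty) :
    faceMin S D π l2 m2 d2 ≤ faceMin S D π l1 m1 d1 := by
  apply csInf_le_csInf
  · exact ⟨0, by rintro x ⟨y, _, rfl⟩; exact hp0 y⟩
  · obtain ⟨σ, hσ⟩ := hne
    obtain ⟨x, hx⟩ := gridCubeZ_nonempty hS σ
    exact ⟨π x, Set.mem_image_of_mem _ (Set.mem_biUnion hσ hx)⟩
  · exact Set.image_mono (Set.biUnion_subset_biUnion_left hsub)

lemma faceMin_nonneg (hp0 : ∀ x, 0 ≤ π x) (l m dd : Fin D → ℤ) :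
    0 ≤ faceMin S D π l m dd := by
  unfold faceMin
  rcases Set.eq_empty_or_nonempty (π '' ⋃ σ ∈ face D l m dd, gridCubeZ S D σ) with h | h
  · rw [h]; simp [Real.sInf_empty]
  · exact le_csInf h (by rintro x ⟨y, _, rfl⟩; exact hp0 y)

lemma faceMin_mem (hS : 0 < S) (hπ : ∀ x, ∃ k, π x = p k) (l m dd : Fin D → ℤ)
    (hne : (face D l m dd).Nonempty) : ∃ k, faceMin S D π l m dd = p k := by
  have hune : (π '' ⋃ σ ∈ face D l m dd, gridCubeZ S D σ).Nonempty := by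
    obtain ⟨σ, hσ⟩ := hne
    obtain ⟨x, hx⟩ := gridCubeZ_nonempty hS σ
    exact ⟨π x, Set.mem_image_of_mem _ (Set.mem_biUnion hσ hx)⟩
  have hsub : (π '' ⋃ σ ∈ face D l m dd, gridCubeZ S D σ) ⊆ Set.range p := by
    rintro x ⟨y, _, rfl⟩
    obtain ⟨k, hk⟩ := hπ y
    exact ⟨k, hk.symm⟩
  have hfin : (π '' ⋃ σ ∈ face D l m dd, gridCubeZ S D σ).Finite :=
    (Set.finite_range p).subset hsub
  obtain ⟨k, hk⟩ := hsub (hune.csInf_mem hfin)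
  exact ⟨k, hk.symm⟩

lemma face_shift {D : ℕ} (δ : Fin D → ℤ) (hδmem : ∀ d, δ d = -1 ∨ δ d = 0 ∨ δ d = 1)
    (lam mu : Fin D → ℤ) (s : ℤ) (hs : 1 ≤ s) (hgap : ∀ d, s + 1 ≤ mu d - lam d) :
    face D lam mu δ ⊆ face D (fun d => lam d + s * δ d) (fun d => mu d + s * δ d) 0 := by
  intro σ hσ d
  refine ⟨fun h => absurd h (by simp), fun h => absurd h (by simp), fun _ => ?_⟩
  have hg := hgap d
  rcases hδmem d with h | h | h
  · have h1 := (hσ d).1 h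
    simp only [h, mul_neg_one]
    omega
  · have h1 := (hσ d).2.2 h
    simp only [h, mul_zero]
    omega
  · have h1 := (hσ d).2.1 h
    simp only [h, mul_one]
    omega

lemma face_delta_nonempty {D : ℕ} (δ : Fin D → ℤ) (hδmem : ∀ d, δ d = -1 ∨ δ d = 0 ∨ δ d = 1)
    (lam mu : Fin D → ℤ) (h : (face D lam mu 0).Nonempty) : (face D lam mu δ).Nonempty := by
  obtain ⟨σ0, hσ0⟩ := h
  refine ⟨fun d => if δ d = -1 then lam d else if δ d = 1 then mu d else σ0 d, fun d => ?_⟩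
  have h0 := (hσ0 d).2.2 (by simp)
  refine ⟨fun h => by simp [h], fun h => ?_, fun h => ?_⟩
  · have h' : δ d ≠ -1 := by omega
    simp [h, h']
  · have h1 : δ d ≠ -1 := by omega
    have h2 : δ d ≠ 1 := by omega
    simpa [h1, h2] using h0

end Aux

/-- The set of buckets in `B^≥_{S,M}` on which the minimum of `π` over the interior face
strictly exceeds its minimum over the `δ`-face has cardinality at most `2DKS^{2D}/M`. -/
theorem stmt14 (S M D K : ℕ) (hS : 1 < S) (hM1 : 1 ≤ M) (hMS : M ≤ S - 1)
    (hD : 1 ≤ D) (hK : 1 ≤ K)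
    (p : Fin K → ℝ) (hp : ∀ k, 0 < p k ∧ p k ≤ 1)
    (hmono : StrictMono p)
    (δ : Fin D → ℤ) (hδmem : ∀ d, δ d = -1 ∨ δ d = 0 ∨ δ d = 1) (hδ0 : δ ≠ 0)
    (π : (Fin D → ℝ) → ℝ) (hπ : ∀ x, ∃ k : Fin K, π x = p k) (hmeas : Measurable π) :
    (({q : (Fin D → ℤ) × (Fin D → ℤ) |
        (∀ d, 1 ≤ q.1 d ∧ q.1 d ≤ S) ∧ (∀ d, 1 ≤ q.2 d ∧ q.2 d ≤ S) ∧
        (∀ d, q.1 d ≤ q.2 d) ∧ (∀ d, (M : ℤ) ≤ q.2 d - q.1 d) ∧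
        faceMin S D π q.1 q.2 0 > faceMin S D π q.1 q.2 δ}).ncard : ℝ)
      ≤ 2 * D * K * (S : ℝ) ^ (2 * D) / M := by
  classical
  haveI hneD : Nonempty (Fin D) := ⟨⟨0, hD⟩⟩
  have hS0 : 0 < S := by omega
  have hp0 : ∀ x, 0 ≤ π x := fun x => by
    obtain ⟨k, hk⟩ := hπ x; rw [hk]; exact (hp k).1.le
  set A := {q : (Fin D → ℤ) × (Fin D → ℤ) |
        (∀ d, 1 ≤ q.1 d ∧ q.1 d ≤ S) ∧ (∀ d, 1 ≤ q.2 d ∧ q.2 d ≤ S) ∧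
        (∀ d, q.1 d ≤ q.2 d) ∧ (∀ d, (M : ℤ) ≤ q.2 d - q.1 d) ∧
        faceMin S D π q.1 q.2 0 > faceMin S D π q.1 q.2 δ} with hA
  have hAmem : ∀ q : (Fin D → ℤ) × (Fin D → ℤ), q ∈ A →
      (∀ d, 1 ≤ q.1 d ∧ q.1 d ≤ S) ∧ (∀ d, 1 ≤ q.2 d ∧ q.2 d ≤ S) ∧
      (∀ d, q.1 d ≤ q.2 d) ∧ (∀ d, (M : ℤ) ≤ q.2 d - q.1 d) ∧
      faceMin S D π q.1 q.2 0 > faceMin S D π q.1 q.2 δ := fun q hq => hq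
  obtain ⟨d0, hd0⟩ : ∃ d, δ d ≠ 0 := by
    by_contra h; push_neg at h; exact hδ0 (funext h)
  set ψ : ((Fin D → ℤ) × (Fin D → ℤ)) → Fin D → ℤ :=
    fun q d => if δ d = 1 then (S:ℤ) - q.2 d else if δ d = 0 then (S:ℤ) else q.1 d - 1 with hψ
  set tq : ((Fin D → ℤ) × (Fin D → ℤ)) → ℤ :=
    fun q => Finset.univ.inf' Finset.univ_nonempty (ψ q) with htq
  have htq_le : ∀ q d, tq q ≤ ψ q d := fun q d => Finset.inf'_le _ (Finset.mem_univ d)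
  have htq0 : ∀ q ∈ A, 0 ≤ tq q := by
    intro q hq
    obtain ⟨h1, h2, h3, h4, h5⟩ := hAmem q hq
    apply Finset.le_inf'
    intro d _
    simp only [hψ]
    split_ifs with e1 e2
    · linarith [(h2 d).2]
    · exact_mod_cast Nat.zero_le S
    · linarith [(h1 d).1]
  have htqS : ∀ q ∈ A, tq q ≤ (S:ℤ) - 1 := by
    intro q hq
    obtain ⟨h1, h2, h3, h4, h5⟩ := hAmem q hq
    have h := htq_le q d0
    simp only [hψ] at h
    rcases hδmem d0 with e|e|e
    · have hne1 : δ d0 ≠ 1 := by omega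
      rw [if_neg hne1, if_neg hd0] at h
      linarith [(h1 d0).2]
    · exact absurd e hd0
    · rw [if_pos e] at h
      linarith [(h2 d0).1]
  set aq : ((Fin D → ℤ) × (Fin D → ℤ)) → ((Fin D → ℤ) × (Fin D → ℤ)) :=
    fun q => (fun d => q.1 d + tq q * δ d, fun d => q.2 d + tq q * δ d) with haq
  have hint : ∀ q ∈ A, (face D q.1 q.2 0).Nonempty := by
    intro q hq
    by_contra h
    rw [Set.not_nonempty_iff_eq_empty] at h
    have h0 : faceMin S D π q.1 q.2 0 = 0 := by
      unfold faceMin; rw [h]; simp [Real.sInf_empty]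
    have h1 := faceMin_nonneg (S := S) hp0 q.1 q.2 δ
    have h2 := (hAmem q hq).2.2.2.2
    rw [h0] at h2
    linarith
  set kq : ((Fin D → ℤ) × (Fin D → ℤ)) → Fin K :=
    fun q => if h : ∃ k, faceMin S D π q.1 q.2 0 = p k then h.choose else ⟨0, hK⟩ with hkq
  have hkval : ∀ q ∈ A, faceMin S D π q.1 q.2 0 = p (kq q) := by
    intro q hq
    have hex : ∃ k, faceMin S D π q.1 q.2 0 = p k :=
      faceMin_mem hS0 hπ q.1 q.2 0 (hint q hq)
    simp only [hkq, dif_pos hex]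
    exact hex.choose_spec
  -- separation
  have hsep : ∀ q ∈ A, ∀ q' ∈ A, aq q = aq q' → kq q = kq q' →
      (tq q).toNat / M = (tq q').toNat / M → tq q ≤ tq q' → q = q' := by
    intro q hq q' hq' haeq hkeq hblk hle
    have h0 : 0 ≤ tq q := htq0 q hq
    have h0' : 0 ≤ tq q' := htq0 q' hq'
    have hM0 : 0 < M := hM1
    have hlt : (tq q').toNat < (tq q).toNat + M := by
      have hmod : (tq q').toNat % M < M := Nat.mod_lt _ hM0
      have hdm := Nat.div_add_mod (tq q').toNat M
      have hdm2 : M * ((tq q).toNat / M) ≤ (tq q).toNat := Nat.mul_div_le _ M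
      rw [← hblk] at hdm
      linarith
    have haeq1 : ∀ d, q.1 d + tq q * δ d = q'.1 d + tq q' * δ d := by
      intro d
      exact congrFun (congrArg Prod.fst haeq) d
    have haeq2 : ∀ d, q.2 d + tq q * δ d = q'.2 d + tq q' * δ d := by
      intro d
      exact congrFun (congrArg Prod.snd haeq) d
    rcases eq_or_lt_of_le hle with heq | hlt'
    · have e1 : q.1 = q'.1 := by
        funext d
        have := haeq1 d
        rw [heq] at this
        exact add_right_cancel this
      have e2 : q.2 = q'.2 := by
        funext d
        have := haeq2 d
        rw [heq] at this
        exact add_right_cancel this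
      exact Prod.ext e1 e2
    · exfalso
      set s := tq q' - tq q with hs
      have hs1 : 1 ≤ s := by omega
      have hsM : s + 1 ≤ M := by omega
      have hrel1 : q.1 = fun d => q'.1 d + s * δ d := by
        funext d
        have h := haeq1 d
        have e : s * δ d = tq q' * δ d - tq q * δ d := by rw [hs]; ring
        linarith
      have hrel2 : q.2 = fun d => q'.2 d + s * δ d := by
        funext d
        have h := haeq2 d
        have e : s * δ d = tq q' * δ d - tq q * δ d := by rw [hs]; ring
        linarith
      have hgap : ∀ d, s + 1 ≤ q'.2 d - q'.1 d := by
        intro d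
        have := (hAmem q' hq').2.2.2.1 d
        omega
      have hsub := face_shift δ hδmem q'.1 q'.2 s hs1 hgap
      rw [← hrel1, ← hrel2] at hsub
      have hmono2 := faceMin_mono hS0 hp0 hsub
        (face_delta_nonempty δ hδmem _ _ (hint q' hq'))
      have hlt2 := (hAmem q' hq').2.2.2.2
      have e1 := hkval q hq
      have e2 := hkval q' hq'
      rw [hkeq] at e1
      linarith
  -- finsets
  set Box : Finset (Fin D → ℤ) := Fintype.piFinset fun _ => Finset.Icc 1 (S:ℤ) with hBox
  set Boxd : Fin D → Finset (Fin D → ℤ) :=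
    fun d => Fintype.piFinset fun e => if e = d then {1} else Finset.Icc 1 (S:ℤ) with hBoxd
  set Sl : Fin D → Finset ((Fin D → ℤ) × (Fin D → ℤ)) :=
    fun d => (Box ×ˢ Box).filter fun a => if δ d = 1 then a.2 d = (S:ℤ) else a.1 d = 1 with hSl
  set Dset : Finset (Fin D) := Finset.univ.filter fun d => δ d ≠ 0 with hDset
  set Bn : ℕ := (S-1)/M + 1 with hBn
  set T : Finset (((Fin D → ℤ) × (Fin D → ℤ)) × (Fin K × ℕ)) :=
    (Dset.biUnion Sl) ×ˢ (Finset.univ ×ˢ Finset.range Bn) with hT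
  set F : ((Fin D → ℤ) × (Fin D → ℤ)) → ((Fin D → ℤ) × (Fin D → ℤ)) × (Fin K × ℕ) :=
    fun q => (aq q, kq q, (tq q).toNat / M) with hF
  have hmaps : ∀ q ∈ A, F q ∈ (T : Set _) := by
    intro q hq
    obtain ⟨hb1, hb2, hb3, hb4, hb5⟩ := hAmem q hq
    obtain ⟨dstar, _, hdstar⟩ := Finset.exists_mem_eq_inf' Finset.univ_nonempty (ψ q)
    have htval : tq q = ψ q dstar := by simp only [htq]; exact hdstar
    have ht0 := htq0 q hq
    have htS := htqS q hq
    have hds0 : δ dstar ≠ 0 := by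
      intro h
      have : ψ q dstar = (S:ℤ) := by simp [hψ, h]
      rw [htval, this] at htS
      omega
    have hbox : ∀ d, (1 ≤ q.1 d + tq q * δ d ∧ q.1 d + tq q * δ d ≤ S) ∧
        (1 ≤ q.2 d + tq q * δ d ∧ q.2 d + tq q * δ d ≤ S) := by
      intro d
      have hl := hb1 d
      have hm := hb2 d
      have hlm := hb3 d
      have hpsi := htq_le q d
      simp only [hψ] at hpsi
      split_ifs at hpsi with e1 e2
      · rw [e1]; constructor <;> constructor <;> omega
      · rw [e2]; simp only [mul_zero, add_zero]; omega
      · have e3 : δ d = -1 := by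
          rcases hδmem d with h|h|h
          · exact h
          · exact absurd h e2
          · exact absurd h e1
        rw [e3]
        constructor <;> constructor <;> omega
    rw [Finset.mem_coe]
    simp only [hT, Finset.mem_product]
    refine ⟨?_, Finset.mem_univ _, ?_⟩
    · apply Finset.mem_biUnion.mpr
      refine ⟨dstar, by simp [hDset, hds0], ?_⟩
      simp only [hSl, Finset.mem_filter, Finset.mem_product]
      refine ⟨⟨?_, ?_⟩, ?_⟩
      · simp only [hF, haq, hBox, Fintype.mem_piFinset]
        intro d
        rw [Finset.mem_Icc]
        exact (hbox d).1
      · simp only [hF, haq, hBox, Fintype.mem_piFinset]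
        intro d
        rw [Finset.mem_Icc]
        exact (hbox d).2
      · by_cases h1 : δ dstar = 1
        · rw [if_pos h1]
          have : ψ q dstar = (S:ℤ) - q.2 dstar := by simp [hψ, h1]
          show q.2 dstar + tq q * δ dstar = (S:ℤ)
          rw [htval, this, h1]
          ring
        · rw [if_neg h1]
          have e3 : δ dstar = -1 := by
            rcases hδmem dstar with h|h|h
            · exact h
            · exact absurd h hds0
            · exact absurd h h1
          have : ψ q dstar = q.1 dstar - 1 := by simp [hψ, h1, hds0]
          show q.1 dstar + tq q * δ dstar = 1
          rw [htval, this, e3]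
          ring
    · simp only [hF, Finset.mem_range]
      have h1 : (tq q).toNat ≤ S - 1 := by omega
      have h2 : (tq q).toNat / M ≤ (S-1)/M := Nat.div_le_div_right h1
      omega
  have hinj : Set.InjOn F A := by
    intro q hq q' hq' hFq
    have h1 : aq q = aq q' := congrArg Prod.fst hFq
    have h2 : kq q = kq q' := congrArg (fun z => z.2.1) hFq
    have h3 : (tq q).toNat / M = (tq q').toNat / M := congrArg (fun z => z.2.2) hFq
    rcases le_total (tq q) (tq q') with h | h
    · exact hsep q hq q' hq' h1 h2 h3 h
    · exact (hsep q' hq' q hq h1.symm h2.symm h3.symm h).symm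
  -- cardinalities
  have hBoxcard : Box.card = S ^ D := by
    simp only [hBox]
    rw [Fintype.card_piFinset]
    simp [Int.card_Icc]
  have hBoxdcard : ∀ d, (Boxd d).card = S ^ (D-1) := by
    intro d
    simp only [hBoxd]
    rw [Fintype.card_piFinset]
    rw [← Finset.mul_prod_erase Finset.univ _ (Finset.mem_univ d)]
    rw [if_pos rfl]
    simp only [Finset.card_singleton, one_mul]
    have hterm : ∀ e ∈ Finset.univ.erase d,
        ((if e = d then ({1}:Finset ℤ) else Finset.Icc 1 (S:ℤ))).card = S := by
      intro e he
      rw [if_neg (Finset.ne_of_mem_erase he)]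
      simp [Int.card_Icc]
    rw [Finset.prod_congr rfl hterm, Finset.prod_const,
      Finset.card_erase_of_mem (Finset.mem_univ d)]
    simp
  have hSlcard : ∀ d, (Sl d).card ≤ S^(D-1) * S^D := by
    intro d
    have hupd : ∀ (f : Fin D → ℤ), f ∈ Box → Function.update f d 1 ∈ Boxd d := by
      intro f hf
      simp only [hBoxd, Fintype.mem_piFinset]
      intro e
      by_cases he : e = d
      · subst he; simp
      · rw [Function.update_of_ne he, if_neg he]
        simp only [hBox, Fintype.mem_piFinset] at hf
        exact hf e
    have hmapsj : ∀ a ∈ Sl d, (fun a : (Fin D → ℤ) × (Fin D → ℤ) =>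
        if δ d = 1 then (Function.update a.2 d 1, a.1)
        else (Function.update a.1 d 1, a.2)) a ∈ (Boxd d) ×ˢ Box := by
      intro a ha
      simp only [hSl, Finset.mem_filter, Finset.mem_product] at ha
      obtain ⟨⟨ha1, ha2⟩, hcond⟩ := ha
      split_ifs with h
      · exact Finset.mem_product.mpr ⟨hupd _ ha2, ha1⟩
      · exact Finset.mem_product.mpr ⟨hupd _ ha1, ha2⟩
    have hinjj : Set.InjOn (fun a : (Fin D → ℤ) × (Fin D → ℤ) =>
        if δ d = 1 then (Function.update a.2 d 1, a.1)
        else (Function.update a.1 d 1, a.2)) (Sl d) := by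
      intro a ha b hb hab
      simp only [Finset.mem_coe] at ha hb
      simp only at hab
      simp only [Finset.mem_coe, hSl, Finset.mem_filter, Finset.mem_product] at ha hb
      obtain ⟨⟨ha1, ha2⟩, hconda⟩ := ha
      obtain ⟨⟨hb1, hb2⟩, hcondb⟩ := hb
      by_cases h : δ d = 1
      · rw [if_pos h, if_pos h] at hab
        rw [if_pos h] at hconda hcondb
        injection hab with hab1 hab2
        have hsnd : a.2 = b.2 := by
          funext e
          by_cases he : e = d
          · subst he; rw [hconda, hcondb]
          · have := congrFun hab1 e
            rwa [Function.update_of_ne he, Function.update_of_ne he] at this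
        exact Prod.ext hab2 hsnd
      · rw [if_neg h, if_neg h] at hab
        rw [if_neg h] at hconda hcondb
        injection hab with hab1 hab2
        have hfst : a.1 = b.1 := by
          funext e
          by_cases he : e = d
          · subst he; rw [hconda, hcondb]
          · have := congrFun hab1 e
            rwa [Function.update_of_ne he, Function.update_of_ne he] at this
        exact Prod.ext hfst hab2
    have hcard := Finset.card_le_card_of_injOn _ hmapsj hinjj
    calc (Sl d).card ≤ ((Boxd d) ×ˢ Box).card := hcard
      _ = S^(D-1) * S^D := by rw [Finset.card_product, hBoxdcard d, hBoxcard]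
  have hAnch : (Dset.biUnion Sl).card ≤ D * (S^(D-1) * S^D) := by
    calc (Dset.biUnion Sl).card ≤ ∑ d ∈ Dset, (Sl d).card := Finset.card_biUnion_le
      _ ≤ ∑ _d ∈ Dset, (S^(D-1)*S^D) := Finset.sum_le_sum (fun d _ => hSlcard d)
      _ = Dset.card * (S^(D-1)*S^D) := by rw [Finset.sum_const, smul_eq_mul]
      _ ≤ D * (S^(D-1)*S^D) := by
          apply Nat.mul_le_mul_right
          calc Dset.card ≤ (Finset.univ : Finset (Fin D)).card := Finset.card_filter_le _ _
            _ = D := by simp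
  have hTcard : T.card ≤ D * (S^(D-1)*S^D) * (K * Bn) := by
    simp only [hT]
    rw [Finset.card_product, Finset.card_product, Finset.card_univ, Fintype.card_fin,
      Finset.card_range]
    exact Nat.mul_le_mul_right _ hAnch
  have hncard : A.ncard ≤ T.card := by
    have := Set.ncard_le_ncard_of_injOn F hmaps hinj T.finite_toSet
    rwa [Set.ncard_coe_finset] at this
  have hBnM : Bn * M ≤ 2 * S := by
    have h := Nat.div_mul_le_self (S-1) M
    have he : Bn * M = (S-1)/M * M + M := by rw [hBn]; ring
    have h2 : S - 1 ≤ S := by omega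
    rw [he]
    have h3 : S - 1 + M ≤ 2 * S := by omega
    linarith
  have hMR : (0:ℝ) < (M:ℝ) := by exact_mod_cast hM1
  calc ((A.ncard : ℕ) : ℝ) ≤ ((T.card : ℕ) : ℝ) := by exact_mod_cast hncard
    _ ≤ ((D * (S^(D-1)*S^D) * (K * Bn) : ℕ) : ℝ) := by exact_mod_cast hTcard
    _ ≤ 2 * D * K * (S : ℝ) ^ (2 * D) / M := by
        rw [le_div_iff₀ hMR]
        have hpow : (S:ℝ)^(2*D) = (S:ℝ)^(D-1)*(S:ℝ)^D*(S:ℝ) := by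
          rw [show 2*D = D-1+D+1 from by omega, pow_add, pow_add, pow_one]
        have hnat : D * (S^(D-1)*S^D) * (K * Bn) * M ≤ 2*D*K*(S^(D-1)*S^D*S) := by
          calc D * (S^(D-1)*S^D) * (K * Bn) * M
              = D*K*(S^(D-1)*S^D)*(Bn*M) := by ring
            _ ≤ D*K*(S^(D-1)*S^D)*(2*S) := Nat.mul_le_mul le_rfl hBnM
            _ = 2*D*K*(S^(D-1)*S^D*S) := by ring
        calc ((D * (S^(D-1)*S^D) * (K * Bn) : ℕ) : ℝ) * (M:ℝ)
            = ((D * (S^(D-1)*S^D) * (K * Bn) * M : ℕ) : ℝ) := by push_cast; ring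
          _ ≤ ((2*D*K*(S^(D-1)*S^D*S) : ℕ) : ℝ) := by exact_mod_cast hnat
          _ = 2 * D * K * (S : ℝ) ^ (2 * D) := by push_cast; rw [hpow]
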